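/- For every n ≥ 1, every tuning parameter η_n > 0 and all nonnegative real numbers a_n and b_n, the infimal coverage probability of the interval C_{A,n} = [θ̂_A − a_n, θ̂_A + b_n] is given by inf_{θ∈ℝ} P_{n,θ}(θ ∈ C_{A,n}) = Φ(n^{1/2}(a_n − η_n)) − Φ(n^{1/2}((a_n − b_n)/2 − sqrt(((a_n + b_n)/2)² + η_n²))) if a_n ≤ b_n, and = Φ(n^{1/2}(b_n − η_n)) − Φ(n^{1/2}((b_n − a_n)/2 − sqrt(((a_n + b_n)/2)² + η_n²))) if a_n > b_n. -/

import Mathlib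

open MeasureTheory ProbabilityTheory Filter
open scoped NNReal

/-- Standard normal cumulative distribution function Φ. -/
noncomputable def stdNormCDF (x : ℝ) : ℝ :=
  ((gaussianReal 0 1) (Set.Iic x)).toReal

/-- Soft-thresholding (LASSO) estimator with threshold η, as a function of ȳ. -/
noncomputable def softThresh (η y : ℝ) : ℝ := Real.sign y * max (|y| - η) 0

/-- Hard-thresholding estimator with threshold η, as a function of ȳ. -/
noncomputable def hardThresh (η y : ℝ) : ℝ := if η < |y| then y else 0

/-- Adaptive LASSO estimator with tuning parameter η, as a function of ȳ. -/
noncomputable def adaLasso (η y : ℝ) : ℝ := if |y| ≤ η then 0 else y - η ^ 2 / y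

/-- Coverage probability `P_{n,θ}(θ ∈ [est(ȳ) - a, est(ȳ) + b])` in the
known-variance case (σ = 1), where ȳ ~ N(θ, 1/n). -/
noncomputable def cover (n : ℕ) (est : ℝ → ℝ) (a b θ : ℝ) : ℝ :=
  ((gaussianReal θ ((n : ℝ≥0))⁻¹)
    {y : ℝ | est y - a ≤ θ ∧ θ ≤ est y + b}).toReal

section Phi

/-- standard normal pdf -/
noncomputable def phi01 (x : ℝ) : ℝ := gaussianPDFReal 0 1 x

lemma phi01_nonneg (x : ℝ) : 0 ≤ phi01 x := gaussianPDFReal_nonneg 0 1 x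

lemma continuous_phi01 : Continuous phi01 := by
  unfold phi01 gaussianPDFReal
  fun_prop

lemma integrable_phi01 : Integrable phi01 := integrable_gaussianPDFReal 0 1

lemma stdNormCDF_eq_integral (x : ℝ) :
    stdNormCDF x = ∫ t in Set.Iic x, phi01 t := by
  rw [stdNormCDF, gaussianReal_apply_eq_integral 0 one_ne_zero,
    ENNReal.toReal_ofReal (setIntegral_nonneg measurableSet_Iic
      fun t _ => gaussianPDFReal_nonneg 0 1 t)]
  rfl

lemma stdNormCDF_sub (x y : ℝ) :
    stdNormCDF x - stdNormCDF y = ∫ t in y..x, phi01 t := by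
  rw [stdNormCDF_eq_integral, stdNormCDF_eq_integral]
  exact intervalIntegral.integral_Iic_sub_Iic integrable_phi01.integrableOn
    integrable_phi01.integrableOn

lemma hasDerivAt_stdNormCDF (x : ℝ) : HasDerivAt stdNormCDF (phi01 x) x := by
  have h : ∀ z : ℝ, stdNormCDF z = stdNormCDF 0 + ∫ t in (0:ℝ)..z, phi01 t := by
    intro z
    rw [← stdNormCDF_sub z 0]; ring
  have : HasDerivAt (fun u => stdNormCDF 0 + ∫ t in (0:ℝ)..u, phi01 t) (phi01 x) x := by
    refine HasDerivAt.const_add _ ?_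
    refine intervalIntegral.integral_hasDerivAt_right
      integrable_phi01.intervalIntegrable ?_ continuous_phi01.continuousAt
    exact continuous_phi01.stronglyMeasurable.stronglyMeasurableAtFilter
  have he : stdNormCDF = fun u => stdNormCDF 0 + ∫ t in (0:ℝ)..u, phi01 t := funext h
  rw [he]
  exact this

lemma continuous_stdNormCDF : Continuous stdNormCDF :=
  continuous_iff_continuousAt.2 fun x => (hasDerivAt_stdNormCDF x).continuousAt

lemma monotone_stdNormCDF : Monotone stdNormCDF := by
  intro x y hxy
  have h := stdNormCDF_sub y x
  have : 0 ≤ ∫ t in x..y, phi01 t :=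
    intervalIntegral.integral_nonneg hxy fun t _ => phi01_nonneg t
  linarith

lemma phi01_neg (t : ℝ) : phi01 (-t) = phi01 t := by
  simp [phi01, gaussianPDFReal, neg_sq]

lemma stdNormCDF_neg (x : ℝ) : stdNormCDF (-x) = 1 - stdNormCDF x := by
  have h1 : stdNormCDF (-x) = ∫ t in Set.Ioi x, phi01 t := by
    rw [stdNormCDF_eq_integral]
    have : ∫ t in Set.Iic (-x), phi01 t = ∫ t in Set.Iic (-x), phi01 (-t) := by
      simp [phi01_neg]
    rw [this, integral_comp_neg_Iic, neg_neg]

  have h2 : (∫ t in Set.Iic x, phi01 t) + ∫ t in Set.Ioi x, phi01 t = 1 := by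
    have : (∫ t, phi01 t) = 1 := integral_gaussianPDFReal_eq_one 0 one_ne_zero
    rw [← this, ← integral_add_compl measurableSet_Iic integrable_phi01, Set.compl_Iic]
  rw [h1, stdNormCDF_eq_integral]
  linarith

end Phi

section Cmp

lemma gauss_interval_anti {h : ℝ} (hh : 0 ≤ h) {m₁ m₂ : ℝ} (hm : |m₁| ≤ |m₂|) :
    stdNormCDF (m₂ + h) - stdNormCDF (m₂ - h) ≤ stdNormCDF (m₁ + h) - stdNormCDF (m₁ - h) := by
  set g : ℝ → ℝ := fun m => stdNormCDF (m + h) - stdNormCDF (m - h) with hg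
  have hderiv : ∀ x : ℝ, HasDerivAt g (phi01 (x + h) - phi01 (x - h)) x := by
    intro x
    have d1 : HasDerivAt (fun m : ℝ => stdNormCDF (m + h)) (phi01 (x + h)) x := by
      simpa [Function.comp_def] using (hasDerivAt_stdNormCDF (x + h)).comp x ((hasDerivAt_id x).add_const h)
    have d2 : HasDerivAt (fun m : ℝ => stdNormCDF (m - h)) (phi01 (x - h)) x := by
      simpa [Function.comp_def] using (hasDerivAt_stdNormCDF (x - h)).comp x ((hasDerivAt_id x).sub_const h)
    exact d1.sub d2
  have geven : ∀ m : ℝ, g (-m) = g m := by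
    intro m
    have e1 : -m + h = -(m - h) := by ring
    have e2 : -m - h = -(m + h) := by ring
    simp only [hg, e1, e2, stdNormCDF_neg]
    ring
  have gant : AntitoneOn g (Set.Ici 0) := by
    refine antitoneOn_of_deriv_nonpos (convex_Ici 0) ?_ ?_ ?_
    · exact (continuous_iff_continuousAt.2 fun x => (hderiv x).continuousAt).continuousOn
    · exact fun x _ => (hderiv x).differentiableAt.differentiableWithinAt
    · intro x hx
      rw [interior_Ici] at hx
      rw [(hderiv x).deriv]
      have hle : phi01 (x + h) ≤ phi01 (x - h) := by
        unfold phi01 gaussianPDFReal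
        have h0 : (0:ℝ) < x := hx
        refine mul_le_mul_of_nonneg_left (Real.exp_le_exp.2 ?_) (by positivity)
        rw [div_le_div_iff_of_pos_right (by norm_num)]
        nlinarith
      linarith
  have key : ∀ m : ℝ, g m = g |m| := by
    intro m
    rcases abs_cases m with ⟨he, _⟩ | ⟨he, _⟩
    · rw [he]
    · rw [he, geven]
  calc g m₂ = g |m₂| := key m₂
    _ ≤ g |m₁| := gant (abs_nonneg m₁) (abs_nonneg m₂) hm
    _ = g m₁ := (key m₁).symm

lemma cmp_lemma {y₁ x₁ y₂ x₂ : ℝ} (h₁ : y₁ ≤ x₁) (hlen : x₁ - y₁ ≤ x₂ - y₂)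
    (hmid : |x₂ + y₂| ≤ |x₁ + y₁| + (x₂ - y₂) - (x₁ - y₁)) :
    stdNormCDF x₁ - stdNormCDF y₁ ≤ stdNormCDF x₂ - stdNormCDF y₂ := by
  set d : ℝ := (x₁ - y₁) / 2 with hdd
  set m₁ : ℝ := (x₁ + y₁) / 2 with hm₁
  set m₂ : ℝ := (x₂ + y₂) / 2 with hm₂
  set Δ : ℝ := ((x₂ - y₂) - (x₁ - y₁)) / 2 with hΔ
  set m' : ℝ := min (max m₂ (-|m₁|)) |m₁| with hm'
  have hd : 0 ≤ d := by simp only [hdd]; linarith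
  have hΔ0 : 0 ≤ Δ := by simp only [hΔ]; linarith
  have habs2 : |m₂| ≤ |m₁| + Δ := by
    have e2 : x₂ + y₂ = 2 * m₂ := by rw [hm₂]; ring
    have e1 : x₁ + y₁ = 2 * m₁ := by rw [hm₁]; ring
    rw [e1, e2, abs_mul, abs_mul, abs_two] at hmid
    simp only [hΔ]
    linarith
  have hm'abs : |m'| ≤ |m₁| := by
    rw [abs_le]
    constructor
    · refine le_min (le_max_right _ _) ?_
      linarith [abs_nonneg m₁]
    · exact min_le_right _ _
  have hA : m₂ - Δ ≤ m' := by
    refine le_min (le_trans (by linarith) (le_max_left _ _)) ?_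
    have := (abs_le.1 habs2).2
    linarith [le_abs_self m₂]
  have hB : m' ≤ m₂ + Δ := by
    refine le_trans (min_le_left _ _) (max_le (by linarith) ?_)
    have := (abs_le.1 habs2).1
    linarith [neg_abs_le m₂]
  have hx1 : m₁ + d = x₁ := by simp only [hm₁, hdd]; ring
  have hy1 : m₁ - d = y₁ := by simp only [hm₁, hdd]; ring
  have hx2 : m' + d ≤ x₂ := by
    have : m₂ + Δ + d = x₂ := by simp only [hm₂, hΔ, hdd]; ring
    linarith
  have hy2 : y₂ ≤ m' - d := by
    have : m₂ - Δ - d = y₂ := by simp only [hm₂, hΔ, hdd]; ring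
    linarith
  have step1 : stdNormCDF x₁ - stdNormCDF y₁ ≤ stdNormCDF (m' + d) - stdNormCDF (m' - d) := by
    rw [← hx1, ← hy1]
    exact gauss_interval_anti hd hm'abs
  have step2 : stdNormCDF (m' + d) - stdNormCDF (m' - d) ≤ stdNormCDF x₂ - stdNormCDF y₂ := by
    have := monotone_stdNormCDF hx2
    have := monotone_stdNormCDF hy2
    linarith
  linarith

end Cmp

section Thresh

noncomputable def uu (η t : ℝ) : ℝ :=
  if 0 ≤ t then (t + Real.sqrt (t ^ 2 + 4 * η ^ 2)) / 2
  else (t - Real.sqrt (t ^ 2 + 4 * η ^ 2)) / 2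

noncomputable def ll (η s : ℝ) : ℝ :=
  if 0 < s then (s + Real.sqrt (s ^ 2 + 4 * η ^ 2)) / 2
  else (s - Real.sqrt (s ^ 2 + 4 * η ^ 2)) / 2

lemma ll_eq_neg_uu (η s : ℝ) : ll η s = -uu η (-s) := by
  unfold ll uu
  simp only [neg_sq]
  by_cases h : 0 < s
  · rw [if_pos h, if_neg (not_le.mpr (by linarith))]
    ring
  · rw [if_neg h, if_pos (by linarith [not_lt.mp h])]
    ring

lemma adaLasso_odd (η y : ℝ) : adaLasso η (-y) = -adaLasso η y := by
  unfold adaLasso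
  rw [abs_neg]
  split_ifs with h
  · ring
  · rw [div_neg]
    ring

lemma adaLasso_le_iff {η : ℝ} (hη : 0 < η) (y t : ℝ) :
    adaLasso η y ≤ t ↔ y ≤ uu η t := by
  have hsq : Real.sqrt (t ^ 2 + 4 * η ^ 2) ^ 2 = t ^ 2 + 4 * η ^ 2 :=
    Real.sq_sqrt (by positivity)
  have hsnn : 0 ≤ Real.sqrt (t ^ 2 + 4 * η ^ 2) := Real.sqrt_nonneg _
  set S := Real.sqrt (t ^ 2 + 4 * η ^ 2) with hS
  have hS2η : 2 * η ≤ S := by nlinarith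
  unfold adaLasso uu
  by_cases hy : |y| ≤ η
  · rw [if_pos hy]
    have hy1 : -η ≤ y := neg_le_of_abs_le hy
    have hy2 : y ≤ η := le_of_abs_le hy
    by_cases ht : 0 ≤ t
    · rw [if_pos ht]
      constructor
      · intro _; nlinarith
      · intro _; exact ht
    · rw [if_neg ht]
      push_neg at ht
      have hS' : 2 * η < S := by nlinarith
      constructor
      · intro h0; linarith
      · intro hle; exfalso; nlinarith
  · rw [if_neg hy]
    push_neg at hy
    by_cases hy0 : 0 < y
    · have hyη : η < y := by rwa [abs_of_pos hy0] at hy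
      have key : y - η ^ 2 / y ≤ t ↔ y ^ 2 - η ^ 2 ≤ t * y := by
        rw [show y - η ^ 2 / y = (y ^ 2 - η ^ 2) / y by field_simp,
          div_le_iff₀ hy0]
      rw [key]
      by_cases ht : 0 ≤ t
      · rw [if_pos ht]
        constructor
        · intro h
          nlinarith [sq_nonneg (2 * y - t + S), sq_nonneg (2 * y - t - S)]
        · intro h
          nlinarith [mul_nonneg (sub_nonneg.2 h) (by nlinarith : (0:ℝ) ≤ y - (t - S) / 2)]
      · rw [if_neg ht]
        push_neg at ht
        constructor
        · intro h; exfalso; nlinarith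
        · intro h; exfalso; nlinarith
    · push_neg at hy0
      have hyη : y < -η := by
        rcases abs_cases y with ⟨he, _⟩ | ⟨he, _⟩
        · exfalso; rw [he] at hy; linarith
        · rw [he] at hy; linarith
      have hyneg : y < 0 := by linarith
      have hyne : y ≠ 0 := ne_of_lt hyneg
      have hrepr : y - η ^ 2 / y = (y ^ 2 - η ^ 2) / y := by
        field_simp
      have key : y - η ^ 2 / y ≤ t ↔ t * y ≤ y ^ 2 - η ^ 2 := by
        rw [hrepr, div_le_iff_of_neg hyneg]
      rw [key]
      by_cases ht : 0 ≤ t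
      · rw [if_pos ht]
        constructor
        · intro _; nlinarith
        · intro _; nlinarith
      · rw [if_neg ht]
        push_neg at ht
        have hpos : 0 < (t + S) / 2 := by nlinarith
        constructor
        · intro h
          nlinarith [sq_nonneg (2 * y - t + S), sq_nonneg (2 * y - t - S)]
        · intro h
          nlinarith [mul_nonneg (sub_nonneg.2 h) (by nlinarith : (0:ℝ) ≤ (t + S) / 2 - y)]

lemma le_adaLasso_iff {η : ℝ} (hη : 0 < η) (y s : ℝ) :
    s ≤ adaLasso η y ↔ ll η s ≤ y := by
  rw [ll_eq_neg_uu, neg_le]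
  rw [← adaLasso_le_iff hη (-y) (-s), adaLasso_odd]
  constructor <;> intro <;> linarith

lemma ll_le_self_uu {η : ℝ} (hη : 0 < η) (s : ℝ) : ll η s ≤ uu η s := by
  unfold ll uu
  by_cases h1 : 0 < s
  · rw [if_pos h1, if_pos h1.le]
  · rw [if_neg h1]
    by_cases h2 : 0 ≤ s
    · rw [if_pos h2]
      linarith [Real.sqrt_nonneg (s ^ 2 + 4 * η ^ 2)]
    · rw [if_neg h2]

lemma ll_le_uu {η : ℝ} (hη : 0 < η) {s t : ℝ} (hst : s ≤ t) : ll η s ≤ uu η t := by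
  have h1 : adaLasso η (ll η s) ≤ s := (adaLasso_le_iff hη _ _).mpr (ll_le_self_uu hη s)
  exact (adaLasso_le_iff hη _ _).mp (h1.trans hst)

lemma key_ineq {s c η : ℝ} (hs : 0 ≤ s) (hc : 0 ≤ c) (hη : 0 ≤ η) :
    Real.sqrt (s ^ 2 + 4 * η ^ 2) + Real.sqrt (c ^ 2 + 4 * η ^ 2) ≤
      Real.sqrt ((s + c) ^ 2 + 4 * η ^ 2) + 2 * η := by
  set A := Real.sqrt (s ^ 2 + 4 * η ^ 2) with hA
  set B := Real.sqrt (c ^ 2 + 4 * η ^ 2) with hB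
  set C := Real.sqrt ((s + c) ^ 2 + 4 * η ^ 2) with hC
  have hA2 : A ^ 2 = s ^ 2 + 4 * η ^ 2 := Real.sq_sqrt (by positivity)
  have hB2 : B ^ 2 = c ^ 2 + 4 * η ^ 2 := Real.sq_sqrt (by positivity)
  have hC2 : C ^ 2 = (s + c) ^ 2 + 4 * η ^ 2 := Real.sq_sqrt (by positivity)
  have hA0 : 0 ≤ A := Real.sqrt_nonneg _
  have hB0 : 0 ≤ B := Real.sqrt_nonneg _
  have hC0 : 0 ≤ C := Real.sqrt_nonneg _
  have step : A * B ≤ s * c + 2 * η * C := by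
    have hrhs : 0 ≤ s * c + 2 * η * C := by positivity
    have hAB2 : (A * B) ^ 2 = (s ^ 2 + 4 * η ^ 2) * (c ^ 2 + 4 * η ^ 2) := by
      rw [mul_pow, hA2, hB2]
    have hsq : (A * B) ^ 2 ≤ (s * c + 2 * η * C) ^ 2 := by
      nlinarith [mul_nonneg (mul_nonneg hη hs) (mul_nonneg hc hC0),
        mul_nonneg (mul_nonneg hη hη) (mul_nonneg hs hc)]
    nlinarith [mul_nonneg hA0 hB0, hsq, hrhs]
  have h1 : (A + B) ^ 2 ≤ (C + 2 * η) ^ 2 := by nlinarith [step]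
  nlinarith [h1, hA0, hB0, hC0, hη, add_nonneg hA0 hB0, add_nonneg hC0 (by linarith : (0:ℝ) ≤ 2 * η)]

end Thresh

section CoverEq

lemma pdf_scaling (n : ℕ) (hn : 1 ≤ n) (θ y : ℝ) :
    gaussianPDFReal θ ((n : ℝ≥0))⁻¹ y = Real.sqrt n * phi01 (Real.sqrt n * (y - θ)) := by
  have hn0 : (0:ℝ) < (n:ℝ) := by exact_mod_cast hn
  have hsn : (0:ℝ) < Real.sqrt n := Real.sqrt_pos.mpr hn0
  have hsq : (Real.sqrt n) ^ 2 = (n:ℝ) := Real.sq_sqrt hn0.le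
  unfold phi01 gaussianPDFReal
  have hco : ((((n:ℝ≥0))⁻¹ : ℝ≥0) : ℝ) = ((n:ℝ))⁻¹ := by simp
  rw [hco]
  have harg : -(y - θ) ^ 2 / (2 * ((n:ℝ))⁻¹) =
      -(Real.sqrt n * (y - θ) - 0) ^ 2 / (2 * ((1:ℝ≥0):ℝ)) := by
    rw [sub_zero, mul_pow, hsq, NNReal.coe_one]
    field_simp
  rw [harg]
  have e1 : Real.sqrt (2 * Real.pi * ((n:ℝ))⁻¹) =
      Real.sqrt (2 * Real.pi * ((1:ℝ≥0):ℝ)) / Real.sqrt n := by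
    rw [NNReal.coe_one, mul_one,
      show (2 * Real.pi * (n:ℝ)⁻¹) = (2 * Real.pi) / (n:ℝ) by ring,
      Real.sqrt_div (by positivity)]
  rw [e1]
  rw [div_eq_mul_inv, mul_inv, inv_inv]
  ring

lemma cover_set_eq {η : ℝ} (hη : 0 < η) (a b θ : ℝ) :
    {y : ℝ | adaLasso η y - a ≤ θ ∧ θ ≤ adaLasso η y + b} =
      Set.Icc (ll η (θ - b)) (uu η (θ + a)) := by
  ext y
  simp only [Set.mem_setOf_eq, Set.mem_Icc]
  constructor
  · rintro ⟨h1, h2⟩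
    exact ⟨(le_adaLasso_iff hη y _).1 (by linarith), (adaLasso_le_iff hη y _).1 (by linarith)⟩
  · rintro ⟨h1, h2⟩
    have h3 := (adaLasso_le_iff hη y (θ + a)).2 h2
    have h4 := (le_adaLasso_iff hη y (θ - b)).2 h1
    constructor <;> linarith

lemma cover_eq (n : ℕ) (hn : 1 ≤ n) {η : ℝ} (hη : 0 < η) (a b : ℝ)
    (ha : 0 ≤ a) (hb : 0 ≤ b) (θ : ℝ) :
    cover n (adaLasso η) a b θ =
      stdNormCDF (Real.sqrt n * (uu η (θ + a) - θ)) -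
        stdNormCDF (Real.sqrt n * (ll η (θ - b) - θ)) := by
  have hv : ((n : ℝ≥0))⁻¹ ≠ 0 := by
    apply inv_ne_zero
    exact_mod_cast Nat.one_le_iff_ne_zero.mp hn
  have hLU : ll η (θ - b) ≤ uu η (θ + a) := ll_le_uu hη (by linarith)
  rw [cover, cover_set_eq hη a b θ, gaussianReal_apply_eq_integral θ hv,
    ENNReal.toReal_ofReal (setIntegral_nonneg measurableSet_Icc
      fun t _ => gaussianPDFReal_nonneg _ _ t)]
  rw [integral_Icc_eq_integral_Ioc, ← intervalIntegral.integral_of_le hLU,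
    stdNormCDF_sub]
  have hsub : ∀ y ∈ Set.uIcc (ll η (θ - b)) (uu η (θ + a)),
      HasDerivAt (fun y : ℝ => Real.sqrt n * (y - θ)) ((fun _ : ℝ => Real.sqrt n) y) y :=
    fun y _ => by simpa using ((hasDerivAt_id y).sub_const θ).const_mul (Real.sqrt n)
  have hc := intervalIntegral.integral_comp_smul_deriv hsub continuousOn_const continuous_phi01
  rw [← hc]
  apply intervalIntegral.integral_congr
  intro y _
  simp only [Function.comp_apply, smul_eq_mul]
  rw [pdf_scaling n hn θ y]

end CoverEq

section Lower

set_option maxHeartbeats 2000000 in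
lemma lower_bound (n : ℕ) (hn : 1 ≤ n) {η a b : ℝ} (hη : 0 < η) (ha : 0 ≤ a) (hb : 0 ≤ b)
    (hab : a ≤ b) (θ : ℝ) :
    stdNormCDF (Real.sqrt n * (a - η)) -
      stdNormCDF (Real.sqrt n * ((a - b) / 2 - Real.sqrt (((a + b) / 2) ^ 2 + η ^ 2))) ≤
    cover n (adaLasso η) a b θ := by
  rw [cover_eq n hn hη a b ha hb θ]
  have hn0 : (0:ℝ) < (n:ℝ) := by exact_mod_cast hn
  set κ := Real.sqrt (n:ℝ) with hκdef
  have hκ : 0 < κ := Real.sqrt_pos.mpr hn0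
  set W := Real.sqrt (((a + b) / 2) ^ 2 + η ^ 2) with hWdef
  have hW2 : W ^ 2 = ((a + b) / 2) ^ 2 + η ^ 2 := Real.sq_sqrt (by positivity)
  have hW0 : 0 ≤ W := Real.sqrt_nonneg _
  have hWc : (a + b) / 2 ≤ W := by nlinarith
  have hWη : η ≤ W := by nlinarith
  set x1 := a - η with hx1def
  set y1 := (a - b) / 2 - W with hy1def
  have h2W : Real.sqrt ((a + b) ^ 2 + 4 * η ^ 2) = 2 * W := by
    rw [hWdef, show (a+b)^2 + 4*η^2 = 2^2 * (((a+b)/2)^2 + η^2) by ring,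
      Real.sqrt_mul (by positivity), Real.sqrt_sq (by norm_num)]
  clear_value κ W x1 y1
  have hy1x1 : y1 ≤ x1 := by
    simp only [hx1def, hy1def]; linarith
  have hsum1 : x1 + y1 ≤ 0 := by
    simp only [hx1def, hy1def]; linarith
  rcases lt_or_ge (θ + a) 0 with hθa | hθa
  · -- region 1 : θ < -a
    have hθb : ¬ 0 < θ - b := by push_neg; linarith
    set A := Real.sqrt ((θ+a)^2 + 4*η^2) with hAdef
    set B := Real.sqrt ((θ-b)^2 + 4*η^2) with hBdef
    have hA2 : A^2 = (θ+a)^2 + 4*η^2 := Real.sq_sqrt (by positivity)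
    have hB2 : B^2 = (θ-b)^2 + 4*η^2 := Real.sq_sqrt (by positivity)
    have hA0 : 0 ≤ A := Real.sqrt_nonneg _
    have hB0 : 0 ≤ B := Real.sqrt_nonneg _
    simp only [uu, ll]
    rw [if_neg (not_le.mpr hθa), if_neg hθb]
    set X := ((θ+a) - A)/2 - θ with hXdef
    set Y := ((θ-b) - B)/2 - θ with hYdef
    clear_value A B X Y
    have hkey : A + 2*W ≤ B + 2*η := by
      have h := key_ineq (s := -(θ+a)) (c := a+b) (by linarith) (by linarith) hη.le
      rw [show (-(θ+a))^2 = (θ+a)^2 by ring, show (-(θ+a)+(a+b))^2 = (θ-b)^2 by ring, h2W] at h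
      linarith
    have hAup : A ≤ -(θ+a) + 2*η := by
      nlinarith [hA2, hA0, sq_nonneg (A - (-(θ+a) + 2*η))]
    have hAlow : -(θ+a) ≤ A := by
      nlinarith [hA2, hA0, sq_nonneg (A + (θ+a))]
    have hBlow : b - θ ≤ B := by
      nlinarith [hB2, hB0, sq_nonneg (B - (θ - b))]
    have hx1X : x1 ≤ X := by
      simp only [hx1def, hXdef]; linarith
    have hXY0 : X + Y ≤ 0 := by
      simp only [hXdef, hYdef]; linarith
    have hlen : x1 - y1 ≤ X - Y := by
      simp only [hx1def, hy1def, hXdef, hYdef]; linarith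
    apply cmp_lemma (y₁ := κ * y1) (x₁ := κ * x1) (y₂ := κ * Y) (x₂ := κ * X)
    · exact mul_le_mul_of_nonneg_left hy1x1 hκ.le
    · have h := mul_le_mul_of_nonneg_left hlen hκ.le
      rw [mul_sub, mul_sub] at h
      linarith
    · rw [show κ * X + κ * Y = κ * (X + Y) by ring, show κ * x1 + κ * y1 = κ * (x1 + y1) by ring,
        abs_mul, abs_mul, abs_of_pos hκ, abs_of_nonpos hXY0, abs_of_nonpos hsum1]
      have h := mul_le_mul_of_nonneg_left hx1X hκ.le
      nlinarith [h]
  · rcases le_or_gt θ b with hθb | hθb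
    · -- region 2 : -a ≤ θ ≤ b : containment
      have hθb' : ¬ 0 < θ - b := by push_neg; linarith
      simp only [uu, ll]
      rw [if_pos hθa, if_neg hθb']
      set A := Real.sqrt ((θ+a)^2 + 4*η^2) with hAdef
      set B := Real.sqrt ((θ-b)^2 + 4*η^2) with hBdef
      have hA2 : A^2 = (θ+a)^2 + 4*η^2 := hAdef ▸ Real.sq_sqrt (by positivity)
      have hB2 : B^2 = (θ-b)^2 + 4*η^2 := hBdef ▸ Real.sq_sqrt (by positivity)
      have hA0 : 0 ≤ A := hAdef ▸ Real.sqrt_nonneg _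
      have hB0 : 0 ≤ B := hBdef ▸ Real.sqrt_nonneg _
      clear_value A B
      have hAX : θ + a - 2*η ≤ A := by
        nlinarith [hA2, hA0, sq_nonneg (A + (θ + a - 2*η))]
      have hBq : b - θ ≤ B := by
        nlinarith [hB2, hB0, sq_nonneg (B - (θ - b))]
      have hYy1 : 2*W ≤ (a + θ) + B := by
        nlinarith [hB2, hB0, hW2, hW0, mul_nonneg (by linarith : (0:ℝ) ≤ a + θ) (by linarith : (0:ℝ) ≤ B - (b - θ))]
      have m1 : κ * (((θ-b) - B)/2 - θ) ≤ κ * y1 := by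
        apply mul_le_mul_of_nonneg_left _ hκ.le
        simp only [hy1def]; linarith
      have m2 : κ * x1 ≤ κ * (((θ+a) + A)/2 - θ) := by
        apply mul_le_mul_of_nonneg_left _ hκ.le
        simp only [hx1def]; linarith
      have := monotone_stdNormCDF m1
      have := monotone_stdNormCDF m2
      linarith
    · -- region 3 : θ > b
      set A := Real.sqrt ((θ+a)^2 + 4*η^2) with hAdef
      set B := Real.sqrt ((θ-b)^2 + 4*η^2) with hBdef
      have hA2 : A^2 = (θ+a)^2 + 4*η^2 := Real.sq_sqrt (by positivity)
      have hB2 : B^2 = (θ-b)^2 + 4*η^2 := Real.sq_sqrt (by positivity)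
      have hA0 : 0 ≤ A := Real.sqrt_nonneg _
      have hB0 : 0 ≤ B := Real.sqrt_nonneg _
      simp only [uu, ll]
      rw [if_pos hθa, if_pos (by linarith : 0 < θ - b)]
      set X := ((θ+a) + A)/2 - θ with hXdef
      set Y := ((θ-b) + B)/2 - θ with hYdef
      clear_value A B X Y
      have hkey : B + 2*W ≤ A + 2*η := by
        have h := key_ineq (s := θ - b) (c := a+b) (by linarith) (by linarith) hη.le
        rw [show ((θ-b)+(a+b))^2 = (θ+a)^2 by ring, h2W] at h
        linarith
      have hAX : θ + a - 2*η ≤ A := by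
        nlinarith [hA2, hA0, sq_nonneg (A + (θ + a - 2*η))]
      have hBup : B ≤ (θ - b) + 2*η := by
        nlinarith [hB2, hB0, sq_nonneg (B - ((θ-b) + 2*η))]
      have hx1X : x1 ≤ X := by
        simp only [hx1def, hXdef]; linarith
      have hYnx1 : Y ≤ -x1 := by
        simp only [hYdef, hx1def]; linarith
      have hlen : x1 - y1 ≤ X - Y := by
        simp only [hx1def, hy1def, hXdef, hYdef]; linarith
      apply cmp_lemma (y₁ := κ * y1) (x₁ := κ * x1) (y₂ := κ * Y) (x₂ := κ * X)
      · exact mul_le_mul_of_nonneg_left hy1x1 hκ.le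
      · have h := mul_le_mul_of_nonneg_left hlen hκ.le
        rw [mul_sub, mul_sub] at h
        linarith
      · rw [show κ * X + κ * Y = κ * (X + Y) by ring, show κ * x1 + κ * y1 = κ * (x1 + y1) by ring,
          abs_mul, abs_mul, abs_of_pos hκ, abs_of_nonpos hsum1]
        have habs : |X + Y| ≤ -(x1 + y1) + (X - Y) - (x1 - y1) := by
          rw [abs_le]
          constructor
          · linarith
          · linarith
        nlinarith [mul_le_mul_of_nonneg_left habs hκ.le, abs_nonneg (X + Y),
          mul_le_mul_of_nonneg_left (le_abs_self (X+Y)) hκ.le,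
          mul_le_mul_of_nonneg_left (neg_abs_le (X+Y)) hκ.le]

end Lower

section Final

lemma sqrt4eta {η : ℝ} (hη : 0 ≤ η) : Real.sqrt (4 * η ^ 2) = 2 * η := by
  rw [show 4 * η ^ 2 = (2 * η) ^ 2 by ring, Real.sqrt_sq (by positivity)]

set_option maxHeartbeats 1000000 in
lemma infi_eq (n : ℕ) (hn : 1 ≤ n) {η a b : ℝ} (hη : 0 < η) (ha : 0 ≤ a) (hb : 0 ≤ b)
    (hab : a ≤ b) :
    (⨅ θ : ℝ, cover n (adaLasso η) a b θ) =
      stdNormCDF (Real.sqrt n * (a - η)) -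
        stdNormCDF (Real.sqrt n *
          ((a - b) / 2 - Real.sqrt (((a + b) / 2) ^ 2 + η ^ 2))) := by
  have hn0 : (0:ℝ) < (n:ℝ) := by exact_mod_cast hn
  set κ := Real.sqrt (n:ℝ) with hκdef
  set W := Real.sqrt (((a + b) / 2) ^ 2 + η ^ 2) with hWdef
  have h2W : Real.sqrt ((a + b) ^ 2 + 4 * η ^ 2) = 2 * W := by
    rw [hWdef, show (a+b)^2 + 4*η^2 = 2^2 * (((a+b)/2)^2 + η^2) by ring,
      Real.sqrt_mul (by positivity), Real.sqrt_sq (by norm_num)]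
  set V := stdNormCDF (κ * (a - η)) - stdNormCDF (κ * ((a - b) / 2 - W)) with hVdef
  have hlb : ∀ θ : ℝ, V ≤ cover n (adaLasso η) a b θ := lower_bound n hn hη ha hb hab
  have hbdd : BddBelow (Set.range fun θ : ℝ => cover n (adaLasso η) a b θ) := by
    refine ⟨V, ?_⟩
    rintro x ⟨θ, rfl⟩
    exact hlb θ
  refine le_antisymm ?_ (le_ciInf hlb)
  set q : ℝ → ℝ := fun θ =>
    stdNormCDF (κ * ((a - θ - Real.sqrt ((θ + a) ^ 2 + 4 * η ^ 2)) / 2)) -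
      stdNormCDF (κ * ((-b - θ - Real.sqrt ((θ - b) ^ 2 + 4 * η ^ 2)) / 2)) with hqdef
  have hqcont : Continuous q := by
    apply Continuous.sub <;> exact continuous_stdNormCDF.comp (by fun_prop)
  have hqval : q (-a) = V := by
    simp only [hqdef]
    have e1 : (-a + a) ^ 2 + 4 * η ^ 2 = 4 * η ^ 2 := by ring
    have e2 : (-a - b) ^ 2 + 4 * η ^ 2 = (a + b) ^ 2 + 4 * η ^ 2 := by ring
    rw [e1, e2, sqrt4eta hη.le, h2W, hVdef]
    congr 2 <;> ring
  have htendq : Filter.Tendsto q (nhdsWithin (-a) (Set.Iio (-a))) (nhds V) :=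
    hqval ▸ (hqcont.tendsto (-a)).mono_left nhdsWithin_le_nhds
  have htend : Filter.Tendsto (fun θ : ℝ => cover n (adaLasso η) a b θ)
      (nhdsWithin (-a) (Set.Iio (-a))) (nhds V) := by
    apply htendq.congr'
    filter_upwards [self_mem_nhdsWithin] with θ hθ
    have hθa : θ + a < 0 := by
      have : θ < -a := hθ
      linarith
    have hθb : ¬ 0 < θ - b := by push_neg; linarith
    rw [cover_eq n hn hη a b ha hb θ]
    simp only [hqdef, uu, ll]
    rw [if_neg (not_le.mpr hθa), if_neg hθb]
    congr 2 <;> ring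
  exact ge_of_tendsto htend (Filter.Eventually.of_forall fun θ => ciInf_le hbdd θ)

lemma cover_reflect (n : ℕ) (hn : 1 ≤ n) {η : ℝ} (hη : 0 < η) (a b : ℝ)
    (ha : 0 ≤ a) (hb : 0 ≤ b) (θ : ℝ) :
    cover n (adaLasso η) a b θ = cover n (adaLasso η) b a (-θ) := by
  rw [cover_eq n hn hη a b ha hb θ, cover_eq n hn hη b a hb ha (-θ)]
  have e1 : ll η (-θ - a) = -uu η (θ + a) := by
    rw [ll_eq_neg_uu, show -(-θ - a) = θ + a by ring]
  have e2 : uu η (-θ + b) = -ll η (θ - b) := by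
    rw [ll_eq_neg_uu, show -(θ - b) = -θ + b by ring, neg_neg]
  rw [e1, e2]
  have f1 : Real.sqrt n * (-ll η (θ - b) - -θ) = -(Real.sqrt n * (ll η (θ - b) - θ)) := by ring
  have f2 : Real.sqrt n * (-uu η (θ + a) - -θ) = -(Real.sqrt n * (uu η (θ + a) - θ)) := by ring
  rw [f1, f2, stdNormCDF_neg, stdNormCDF_neg]
  ring

end Final

/-- Proposition 3 (adaptive LASSO): the infimal coverage probability of
`C_{A,n} = [θ̂_A - a, θ̂_A + b]`. -/
theorem stmt_3 (n : ℕ) (hn : 1 ≤ n) (η a b : ℝ) (hη : 0 < η) (ha : 0 ≤ a) (hb : 0 ≤ b) :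
    (a ≤ b →
      (⨅ θ : ℝ, cover n (adaLasso η) a b θ) =
        stdNormCDF (Real.sqrt n * (a - η)) -
          stdNormCDF (Real.sqrt n *
            ((a - b) / 2 - Real.sqrt (((a + b) / 2) ^ 2 + η ^ 2)))) ∧
    (b < a →
      (⨅ θ : ℝ, cover n (adaLasso η) a b θ) =
        stdNormCDF (Real.sqrt n * (b - η)) -
          stdNormCDF (Real.sqrt n *
            ((b - a) / 2 - Real.sqrt (((a + b) / 2) ^ 2 + η ^ 2)))) := by
  constructor
  · intro hab
    exact infi_eq n hn hη ha hb hab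
  · intro hba
    have hrange : (Set.range fun θ : ℝ => cover n (adaLasso η) a b θ) =
        Set.range fun θ : ℝ => cover n (adaLasso η) b a θ := by
      ext x
      constructor
      · rintro ⟨θ, rfl⟩
        exact ⟨-θ, (cover_reflect n hn hη a b ha hb θ).symm⟩
      · rintro ⟨θ, rfl⟩
        refine ⟨-θ, ?_⟩
        show cover n (adaLasso η) a b (-θ) = cover n (adaLasso η) b a θ
        rw [cover_reflect n hn hη a b ha hb (-θ), neg_neg]
    have hswap : (⨅ θ : ℝ, cover n (adaLasso η) a b θ) =
        ⨅ θ : ℝ, cover n (adaLasso η) b a θ := by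
      rw [iInf, iInf, hrange]
    rw [hswap, infi_eq n hn hη hb ha hba.le, show b + a = a + b by ring]
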